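/- For any κ in the nonempty region ℓ/((σ_θ+2h)(σ_θ+2h+ℓ)) < κ < min{h/((σ_θ+h)(σ_θ+2h)), ℓ/((σ_θ+ℓ)(σ_θ+2ℓ))} with h > ℓ > 0 and σ_θ > 0, a high-precision agent strictly prefers the pair {h,h} (payoff −1/(σ_θ+2h) − κ) to being a singleton (payoff −1/(σ_θ+h)) and to the triple {h,h,ℓ} (payoff −1/(σ_θ+2h+ℓ) − 2κ). -/

import Mathlib

/-- For any `κ` in the region, a high-precision agent strictly prefers the pair
`{h,h}` (payoff `−1/(σθ+2h) − κ`) to being a singleton (payoff `−1/(σθ+h)`)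
and to the triple `{h,h,ℓ}` (payoff `−1/(σθ+2h+ℓ) − 2κ`). -/
theorem stmt15 (σθ h ℓ κ : ℝ) (hσ : 0 < σθ) (hℓ : 0 < ℓ) (hhl : ℓ < h)
    (hκ : 0 < κ)
    (hlow : ℓ / ((σθ + 2 * h) * (σθ + 2 * h + ℓ)) < κ)
    (hhigh : κ < min (h / ((σθ + h) * (σθ + 2 * h)))
                     (ℓ / ((σθ + ℓ) * (σθ + 2 * ℓ)))) :
    -1 / (σθ + h) < -1 / (σθ + 2 * h) - κ ∧
    -1 / (σθ + 2 * h + ℓ) - 2 * κ < -1 / (σθ + 2 * h) - κ := by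
  have hh : 0 < h := hℓ.trans hhl
  have p1 : 0 < σθ + h := by linarith
  have p2 : 0 < σθ + 2 * h := by linarith
  have p3 : 0 < σθ + 2 * h + ℓ := by linarith
  have h1 : κ < h / ((σθ + h) * (σθ + 2 * h)) := lt_of_lt_of_le hhigh (min_le_left _ _)
  rw [lt_div_iff₀ (by positivity)] at h1
  rw [div_lt_iff₀ (by positivity)] at hlow
  constructor
  · rw [div_sub' (ne_of_gt p2), div_lt_div_iff₀ p1 p2]
    nlinarith
  · have key : (1:ℝ) / (σθ + 2 * h) - 1 / (σθ + 2 * h + ℓ) < κ := by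
      rw [div_sub_div _ _ (ne_of_gt p2) (ne_of_gt p3), div_lt_iff₀ (by positivity)]
      nlinarith
    have e1 : -1 / (σθ + 2 * h) = -(1 / (σθ + 2 * h)) := neg_div _ _
    have e2 : -1 / (σθ + 2 * h + ℓ) = -(1 / (σθ + 2 * h + ℓ)) := neg_div _ _
    linarith
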